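/- Let T₂^high = [−π/2, 3π/2)² \ [−π/2, π/2)². Define μ(ω) = sup_{(θ₁,θ₂) ∈ T₂^high} |1 − ω · (2/9)(2 + cos θ₁)(2 + cos θ₂)(2 − cos θ₁ − cos θ₂)| for ω ∈ ℝ. Then μ(3/4) = 1/3, and μ(ω) > 1/3 for every real ω ≠ 3/4. In other words, the optimal smoothing factor of the mass-based relaxation (using the bilinear finite element mass operator) for the 2D Laplacian is 1/3, uniquely achieved at ω = 3/4. -/

import Mathlib

open Real

def T2high : Set (ℝ × ℝ) :=
  (Set.Ico (-(π / 2)) (3 * π / 2) ×ˢ Set.Ico (-(π / 2)) (3 * π / 2)) \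
    (Set.Ico (-(π / 2)) (π / 2) ×ˢ Set.Ico (-(π / 2)) (π / 2))

noncomputable def muMass2 (ω : ℝ) : ℝ :=
  sSup ((fun θ : ℝ × ℝ =>
    |1 - ω * ((2 / 9) * (2 + cos θ.1) * (2 + cos θ.2) * (2 - cos θ.1 - cos θ.2))|) '' T2high)

lemma g_bounds {θ : ℝ × ℝ} (hθ : θ ∈ T2high) :
    8 / 9 ≤ (2 / 9) * (2 + cos θ.1) * (2 + cos θ.2) * (2 - cos θ.1 - cos θ.2) ∧
    (2 / 9) * (2 + cos θ.1) * (2 + cos θ.2) * (2 - cos θ.1 - cos θ.2) ≤ 16 / 9 := by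
  obtain ⟨⟨⟨h1l, h1r⟩, h2l, h2r⟩, hns⟩ := hθ
  have ha1 := Real.neg_one_le_cos θ.1
  have ha2 := Real.cos_le_one θ.1
  have hb1 := Real.neg_one_le_cos θ.2
  have hb2 := Real.cos_le_one θ.2
  have hpi := Real.pi_pos
  have hkey : cos θ.1 ≤ 0 ∨ cos θ.2 ≤ 0 := by
    rw [Set.mem_prod, not_and_or] at hns
    rcases hns with h | h
    · left
      rw [Set.mem_Ico, not_and_or, not_lt] at h
      rcases h with h | h
      · exact absurd h1l h
      · exact Real.cos_nonpos_of_pi_div_two_le_of_le h (by linarith)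
    · right
      rw [Set.mem_Ico, not_and_or, not_lt] at h
      rcases h with h | h
      · exact absurd h2l h
      · exact Real.cos_nonpos_of_pi_div_two_le_of_le h (by linarith)
  set a := cos θ.1
  set b := cos θ.2
  rcases hkey with h | h
  · constructor
    · nlinarith [sq_nonneg (a + 1), sq_nonneg (b + 1), sq_nonneg (a - b), sq_nonneg (a + b),
        mul_nonneg (by linarith : (0:ℝ) ≤ -a) (by linarith : (0:ℝ) ≤ 1 - b),
        mul_nonneg (by linarith : (0:ℝ) ≤ -a) (by linarith : (0:ℝ) ≤ b + 1),
        mul_nonneg (by linarith : (0:ℝ) ≤ a + 1) (by linarith : (0:ℝ) ≤ b + 1)]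
    · nlinarith [sq_nonneg (2 * a + b), sq_nonneg b, sq_nonneg (a + b),
        mul_nonneg (by linarith : (0:ℝ) ≤ -a) (by linarith : (0:ℝ) ≤ 1 - b),
        mul_nonneg (by linarith : (0:ℝ) ≤ -a) (sq_nonneg (a + b))]
  · constructor
    · nlinarith [sq_nonneg (a + 1), sq_nonneg (b + 1), sq_nonneg (a - b), sq_nonneg (a + b),
        mul_nonneg (by linarith : (0:ℝ) ≤ -b) (by linarith : (0:ℝ) ≤ 1 - a),
        mul_nonneg (by linarith : (0:ℝ) ≤ -b) (by linarith : (0:ℝ) ≤ a + 1),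
        mul_nonneg (by linarith : (0:ℝ) ≤ a + 1) (by linarith : (0:ℝ) ≤ b + 1)]
    · nlinarith [sq_nonneg (2 * b + a), sq_nonneg a, sq_nonneg (a + b),
        mul_nonneg (by linarith : (0:ℝ) ≤ -b) (by linarith : (0:ℝ) ≤ 1 - a),
        mul_nonneg (by linarith : (0:ℝ) ≤ -b) (sq_nonneg (a + b))]

lemma pt1_mem : ((π / 2, π / 2) : ℝ × ℝ) ∈ T2high := by
  have hpi := Real.pi_pos
  refine ⟨⟨⟨by linarith, by linarith⟩, by linarith, by linarith⟩, ?_⟩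
  intro h
  exact absurd h.1.2 (lt_irrefl _)

lemma pt2_mem : ((π, π) : ℝ × ℝ) ∈ T2high := by
  have hpi := Real.pi_pos
  refine ⟨⟨⟨by linarith, by linarith⟩, by linarith, by linarith⟩, ?_⟩
  intro h
  have := h.1.2
  linarith

theorem stmt_8 :
    muMass2 (3 / 4) = 1 / 3 ∧ ∀ ω : ℝ, ω ≠ 3 / 4 → 1 / 3 < muMass2 ω := by
  have hval1 : ∀ ω : ℝ,
      (fun θ : ℝ × ℝ =>
        |1 - ω * ((2 / 9) * (2 + cos θ.1) * (2 + cos θ.2) * (2 - cos θ.1 - cos θ.2))|)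
        ((π / 2, π / 2) : ℝ × ℝ) = |1 - ω * (16 / 9)| := by
    intro ω
    simp [Real.cos_pi_div_two]
    norm_num
  have hval2 : ∀ ω : ℝ,
      (fun θ : ℝ × ℝ =>
        |1 - ω * ((2 / 9) * (2 + cos θ.1) * (2 + cos θ.2) * (2 - cos θ.1 - cos θ.2))|)
        ((π, π) : ℝ × ℝ) = |1 - ω * (8 / 9)| := by
    intro ω
    simp [Real.cos_pi]
    norm_num
  have hbdd : ∀ ω : ℝ, BddAbove ((fun θ : ℝ × ℝ =>
      |1 - ω * ((2 / 9) * (2 + cos θ.1) * (2 + cos θ.2) * (2 - cos θ.1 - cos θ.2))|) '' T2high) := by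
    intro ω
    refine ⟨1 + |ω| * (16 / 9), ?_⟩
    rintro x ⟨θ, hθ, rfl⟩
    obtain ⟨hg1, hg2⟩ := g_bounds hθ
    calc |1 - ω * ((2 / 9) * (2 + cos θ.1) * (2 + cos θ.2) * (2 - cos θ.1 - cos θ.2))|
        ≤ |(1:ℝ)| + |ω * ((2 / 9) * (2 + cos θ.1) * (2 + cos θ.2) * (2 - cos θ.1 - cos θ.2))| :=
          abs_sub _ _
      _ ≤ 1 + |ω| * (16 / 9) := by
          rw [abs_one, abs_mul]
          have : |(2 / 9) * (2 + cos θ.1) * (2 + cos θ.2) * (2 - cos θ.1 - cos θ.2)| ≤ 16 / 9 := by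
            rw [abs_le]; constructor <;> linarith
          nlinarith [abs_nonneg ω]
  constructor
  · apply le_antisymm
    · apply Real.sSup_le
      · rintro x ⟨θ, hθ, rfl⟩
        obtain ⟨hg1, hg2⟩ := g_bounds hθ
        rw [abs_le]
        constructor <;> linarith
      · norm_num
    · have := le_csSup (hbdd (3/4)) (Set.mem_image_of_mem _ pt1_mem)
      norm_num [Real.cos_pi_div_two] at this
      rw [muMass2]
      refine le_trans ?_ this
      norm_num
  · intro ω hω
    rcases lt_or_gt_of_ne hω with h | h
    · have := le_csSup (hbdd ω) (Set.mem_image_of_mem _ pt2_mem)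
      norm_num [Real.cos_pi] at this
      rw [muMass2]
      refine lt_of_lt_of_le ?_ this
      calc (1:ℝ)/3 < 1 - ω * (8/9) := by linarith
        _ ≤ |1 - ω * (8/9)| := le_abs_self _
    · have := le_csSup (hbdd ω) (Set.mem_image_of_mem _ pt1_mem)
      norm_num [Real.cos_pi_div_two] at this
      rw [muMass2]
      refine lt_of_lt_of_le ?_ this
      calc (1:ℝ)/3 < -(1 - ω * (16/9)) := by linarith
        _ ≤ |1 - ω * (16/9)| := neg_le_abs _
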